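/- arXiv:math/9410216 — 5 statements merged into one kernel-verified Lean document; each statement's English description precedes it below -/
import Mathlib

section
/- Let K = ℚ(α) where α⁸ = −15. Then each of the elements (α+1)/(α−1), (α²+α+2)/(α+1), and (α²−α+2)/(−α+1) of K is a unit of the ring of integers 𝓞_K (i.e., each lies in 𝓞_K and its inverse also lies in 𝓞_K). -/
open Polynomial

set_option maxHeartbeats 4000000


/-- For `K = ℚ(α)` with `α⁸ = -15`, the elements `(α+1)/(α-1)`, `(α²+α+2)/(α+1)` and
`(α²-α+2)/(-α+1)` are units of the ring of integers of `K`: each is integral over `ℤ`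
and its inverse is integral over `ℤ`. -/
theorem units_of_K
    (K : Type*) [Field K] [NumberField K]
    (α : K) (hα : α ^ 8 = -15) (hgen : Algebra.adjoin ℚ {α} = ⊤) :
    (IsIntegral ℤ ((α + 1) / (α - 1)) ∧ IsIntegral ℤ ((α + 1) / (α - 1))⁻¹) ∧
    (IsIntegral ℤ ((α ^ 2 + α + 2) / (α + 1)) ∧
      IsIntegral ℤ ((α ^ 2 + α + 2) / (α + 1))⁻¹) ∧
    (IsIntegral ℤ ((α ^ 2 - α + 2) / (-α + 1)) ∧
      IsIntegral ℤ ((α ^ 2 - α + 2) / (-α + 1))⁻¹) := by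
  have h1 : α - 1 ≠ 0 := by
    intro h
    rw [sub_eq_zero] at h
    rw [h] at hα
    norm_num at hα
  have h2 : α + 1 ≠ 0 := by
    intro h
    have h' : α = -1 := by linear_combination h
    rw [h'] at hα
    norm_num at hα
  have h3 : α ^ 2 + α + 2 ≠ 0 := by
    intro h
    have hlin : 3 * α + 1 = 0 := by
      linear_combination hα - (α^6 - α^5 - α^4 + 3*α^3 - α^2 - 5*α + 7) * h
    have hcontra : (16 : K) / 9 = 0 := by
      linear_combination h - ((3*α + 2)/9) * hlin
    norm_num at hcontra
  have h4 : -α + 1 ≠ 0 := by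
    intro h
    exact h1 (by linear_combination -h)
  have h5 : α ^ 2 - α + 2 ≠ 0 := by
    intro h
    have hlin : -3 * α + 1 = 0 := by
      linear_combination hα - (α^6 + α^5 - α^4 - 3*α^3 - α^2 + 5*α + 7) * h
    have hcontra : (16 : K) / 9 = 0 := by
      linear_combination h - ((2 - 3*α)/9) * hlin
    norm_num at hcontra
  refine ⟨⟨?_, ?_⟩, ⟨?_, ?_⟩, ⟨?_, ?_⟩⟩
  · -- (α+1)/(α-1)
    have ht : ((α + 1) / (α - 1)) * (α - 1) = α + 1 := div_mul_cancel₀ _ h1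
    set t := (α + 1) / (α - 1) with hxdef
    refine ⟨(X^8 - 7*X^7 + 28*X^6 - 49*X^5 + 70*X^4 - 49*X^3 + 28*X^2 - 7*X + 1 : Polynomial ℤ), by monicity!, ?_⟩
    simp only [Polynomial.eval₂_add, Polynomial.eval₂_sub, Polynomial.eval₂_mul,
      Polynomial.eval₂_pow, Polynomial.eval₂_X, Polynomial.eval₂_one, Polynomial.eval₂_ofNat]
    linear_combination (((-1:K)/16) + ((1:K)/16)*α + ((-1:K)/16)*α^2 + ((1:K)/16)*α^3 + ((-1:K)/16)*α^4 + ((1:K)/16)*α^5 + ((-1:K)/16)*α^6 + ((1:K)/16)*α^7 + ((-7:K)/16)*t + ((5:K)/16)*t*α + ((-3:K)/16)*t*α^2 + ((1:K)/16)*t*α^3 + ((1:K)/16)*t*α^4 + ((-3:K)/16)*t*α^5 + ((5:K)/16)*t*α^6 + ((-7:K)/16)*t*α^7 + ((-21:K)/16)*t^2 + ((9:K)/16)*t^2*α + ((-1:K)/16)*t^2*α^2 + ((-3:K)/16)*t^2*α^3 + ((3:K)/16)*t^2*α^4 + ((1:K)/16)*t^2*α^5 + ((-9:K)/16)*t^2*α^6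 + ((21:K)/16)*t^2*α^7 + ((-35:K)/16)*t^3 + ((5:K)/16)*t^3*α + ((5:K)/16)*t^3*α^2 + ((-3:K)/16)*t^3*α^3 + ((-3:K)/16)*t^3*α^4 + ((5:K)/16)*t^3*α^5 + ((5:K)/16)*t^3*α^6 + ((-35:K)/16)*t^3*α^7 + ((-35:K)/16)*t^4 + ((-5:K)/16)*t^4*α + ((5:K)/16)*t^4*α^2 + ((3:K)/16)*t^4*α^3 + ((-3:K)/16)*t^4*α^4 + ((-5:K)/16)*t^4*α^5 + ((5:K)/16)*t^4*α^6 + ((35:K)/16)*t^4*α^7 + ((-21:K)/16)*t^5 + ((-9:K)/16)*t^5*α + ((-1:K)/16)*t^5*α^2 + ((3:K)/16)*t^5*α^3 + ((3:K)/16)*t^5*α^4 + ((-1:K)/16)*t^5*α^5 + ((-9:K)/16)*t^5*α^6 + ((-21:K)/16)*t^5*α^7 + ((-7:K)/16)*t^6 + ((-5:K)/16)*t^6*α + ((-3:K)/16)*t^6*α^2 + ((-1:K)/16)*t^6*α^3 + ((1:K)/16)*t^6*α^4 + ((3:K)/16)*t^6*α^5 + ((5:K)/16)*t^6*α^6 +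 ((7:K)/16)*t^6*α^7 + ((-1:K)/16)*t^7 + ((-1:K)/16)*t^7*α + ((-1:K)/16)*t^7*α^2 + ((-1:K)/16)*t^7*α^3 + ((-1:K)/16)*t^7*α^4 + ((-1:K)/16)*t^7*α^5 + ((-1:K)/16)*t^7*α^6 + ((-1:K)/16)*t^7*α^7) * ht + (((1:K)/16) + ((-1:K)/2)*t + ((7:K)/4)*t^2 + ((-7:K)/2)*t^3 + ((35:K)/8)*t^4 + ((-7:K)/2)*t^5 + ((7:K)/4)*t^6 + ((-1:K)/2)*t^7 + ((1:K)/16)*t^8) * hα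
  · -- inverse
    rw [inv_div]
    have ht : ((α - 1) / (α + 1)) * (α + 1) = α - 1 := div_mul_cancel₀ _ h2
    set t := (α - 1) / (α + 1) with hxdef
    refine ⟨(X^8 - 7*X^7 + 28*X^6 - 49*X^5 + 70*X^4 - 49*X^3 + 28*X^2 - 7*X + 1 : Polynomial ℤ), by monicity!, ?_⟩
    simp only [Polynomial.eval₂_add, Polynomial.eval₂_sub, Polynomial.eval₂_mul,
      Polynomial.eval₂_pow, Polynomial.eval₂_X, Polynomial.eval₂_one, Polynomial.eval₂_ofNat]
    linear_combination (((1:K)/16) + ((1:K)/16)*α + ((1:K)/16)*α^2 + ((1:K)/16)*α^3 + ((1:K)/16)*α^4 + ((1:K)/16)*α^5 + ((1:K)/16)*α^6 + ((1:K)/16)*α^7 + ((7:K)/16)*t + ((5:K)/16)*t*α + ((3:K)/16)*t*α^2 + ((1:K)/16)*t*α^3 + ((-1:K)/16)*t*α^4 + ((-3:K)/16)*t*α^5 + ((-5:K)/16)*t*α^6 + ((-7:K)/16)*t*α^7 + ((21:K)/16)*t^2 + ((9:K)/16)*t^2*α + ((1:K)/16)*t^2*α^2 + ((-3:K)/16)*t^2*α^3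 + ((-3:K)/16)*t^2*α^4 + ((1:K)/16)*t^2*α^5 + ((9:K)/16)*t^2*α^6 + ((21:K)/16)*t^2*α^7 + ((35:K)/16)*t^3 + ((5:K)/16)*t^3*α + ((-5:K)/16)*t^3*α^2 + ((-3:K)/16)*t^3*α^3 + ((3:K)/16)*t^3*α^4 + ((5:K)/16)*t^3*α^5 + ((-5:K)/16)*t^3*α^6 + ((-35:K)/16)*t^3*α^7 + ((35:K)/16)*t^4 + ((-5:K)/16)*t^4*α + ((-5:K)/16)*t^4*α^2 + ((3:K)/16)*t^4*α^3 + ((3:K)/16)*t^4*α^4 + ((-5:K)/16)*t^4*α^5 + ((-5:K)/16)*t^4*α^6 + ((35:K)/16)*t^4*α^7 + ((21:K)/16)*t^5 + ((-9:K)/16)*t^5*α + ((1:K)/16)*t^5*α^2 + ((3:K)/16)*t^5*α^3 + ((-3:K)/16)*t^5*α^4 + ((-1:K)/16)*t^5*α^5 + ((9:K)/16)*t^5*α^6 + ((-21:K)/16)*t^5*α^7 + ((7:K)/16)*t^6 + ((-5:K)/16)*t^6*α + ((3:K)/16)*t^6*α^2 + ((-1:K)/16)*t^6*α^3 + ((-1:K)/16)*t^6*α^4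 + ((3:K)/16)*t^6*α^5 + ((-5:K)/16)*t^6*α^6 + ((7:K)/16)*t^6*α^7 + ((1:K)/16)*t^7 + ((-1:K)/16)*t^7*α + ((1:K)/16)*t^7*α^2 + ((-1:K)/16)*t^7*α^3 + ((1:K)/16)*t^7*α^4 + ((-1:K)/16)*t^7*α^5 + ((1:K)/16)*t^7*α^6 + ((-1:K)/16)*t^7*α^7) * ht + (((1:K)/16) + ((-1:K)/2)*t + ((7:K)/4)*t^2 + ((-7:K)/2)*t^3 + ((35:K)/8)*t^4 + ((-7:K)/2)*t^5 + ((7:K)/4)*t^6 + ((-1:K)/2)*t^7 + ((1:K)/16)*t^8) * hα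
  · -- (α²+α+2)/(α+1)
    have ht : ((α ^ 2 + α + 2) / (α + 1)) * (α + 1) = α ^ 2 + α + 2 := div_mul_cancel₀ _ h2
    set t := (α ^ 2 + α + 2) / (α + 1) with hxdef
    refine ⟨(X^8 - X^7 - 8*X^6 - 13*X^5 + 130*X^4 - 217*X^3 + 112*X^2 + 11*X + 1 : Polynomial ℤ), by monicity!, ?_⟩
    simp only [Polynomial.eval₂_add, Polynomial.eval₂_sub, Polynomial.eval₂_mul,
      Polynomial.eval₂_pow, Polynomial.eval₂_X, Polynomial.eval₂_one, Polynomial.eval₂_ofNat]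
    linear_combination (((-23:K)/16) + ((-11:K)/16)*α + ((17:K)/16)*α^2 + ((-3:K)/16)*α^3 + ((-7:K)/16)*α^4 + ((5:K)/16)*α^5 + ((1:K)/16)*α^6 + ((-3:K)/16)*α^7 + ((133:K)/16)*t + ((-241:K)/16)*t*α + ((57:K)/16)*t*α^2 + ((99:K)/16)*t*α^3 + ((-83:K)/16)*t*α^4 + ((-9:K)/16)*t*α^5 + ((49:K)/16)*t*α^6 + ((-21:K)/16)*t*α^7 + ((-567:K)/16)*t^2 + ((597:K)/16)*t^2*α + ((-107:K)/16)*t^2*α^2 + ((-167:K)/16)*t^2*α^3 + ((145:K)/16)*t^2*α^4 + ((-35:K)/16)*t^2*α^5 + ((-35:K)/16)*t^2*α^6 + ((49:K)/16)*t^2*α^7 + ((785:K)/16)*t^3 + ((-505:K)/16)*t^3*α + ((105:K)/16)*t^3*α^2 + ((63:K)/16)*t^3*α^3 + ((-95:K)/16)*t^3*α^4 + ((71:K)/16)*t^3*α^5 + ((-23:K)/16)*t^3*α^6 + ((-17:K)/16)*t^3*α^7 + ((-415:K)/16)*t^4 + ((205:K)/16)*t^4*α + ((-95:K)/16)*t^4*α^2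 + ((29:K)/16)*t^4*α^3 + ((17:K)/16)*t^4*α^4 + ((-35:K)/16)*t^4*α^5 + ((33:K)/16)*t^4*α^6 + ((-19:K)/16)*t^4*α^7 + ((69:K)/16)*t^5 + ((-57:K)/16)*t^5*α + ((49:K)/16)*t^5*α^2 + ((-29:K)/16)*t^5*α^3 + ((13:K)/16)*t^5*α^4 + ((-1:K)/16)*t^5*α^5 + ((-7:K)/16)*t^5*α^6 + ((11:K)/16)*t^5*α^7 + ((1:K)/16)*t^6 + ((13:K)/16)*t^6*α + ((-11:K)/16)*t^6*α^2 + ((9:K)/16)*t^6*α^3 + ((-7:K)/16)*t^6*α^4 + ((5:K)/16)*t^6*α^5 + ((-3:K)/16)*t^6*α^6 + ((1:K)/16)*t^6*α^7 + ((1:K)/16)*t^7 + ((-1:K)/16)*t^7*α + ((1:K)/16)*t^7*α^2 + ((-1:K)/16)*t^7*α^3 + ((1:K)/16)*t^7*α^4 + ((-1:K)/16)*t^7*α^5 + ((1:K)/16)*t^7*α^6 + ((-1:K)/16)*t^7*α^7) * ht + (((-1:K)/8) + ((-3:K)/16)*α + ((31:K)/16)*t + ((-21:K)/16)*t*α + ((35:K)/16)*t^2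 + ((49:K)/16)*t^2*α + ((-89:K)/16)*t^3 + ((-17:K)/16)*t^3*α + ((31:K)/16)*t^4 + ((-19:K)/16)*t^4*α + ((23:K)/16)*t^5 + ((11:K)/16)*t^5*α + ((-13:K)/16)*t^6 + ((1:K)/16)*t^6*α + ((-1:K)/16)*t^7 + ((-1:K)/16)*t^7*α + ((1:K)/16)*t^8) * hα
  · -- inverse
    rw [inv_div]
    have ht : ((α + 1) / (α ^ 2 + α + 2)) * (α ^ 2 + α + 2) = α + 1 := div_mul_cancel₀ _ h3
    set t := (α + 1) / (α ^ 2 + α + 2) with hxdef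
    refine ⟨(X^8 + 11*X^7 + 112*X^6 - 217*X^5 + 130*X^4 - 13*X^3 - 8*X^2 - X + 1 : Polynomial ℤ), by monicity!, ?_⟩
    simp only [Polynomial.eval₂_add, Polynomial.eval₂_sub, Polynomial.eval₂_mul,
      Polynomial.eval₂_pow, Polynomial.eval₂_X, Polynomial.eval₂_one, Polynomial.eval₂_ofNat]
    linear_combination (((-1:K)/16) + ((1:K)/16)*α + ((-1:K)/16)*α^2 + ((1:K)/16)*α^3 + ((-1:K)/16)*α^4 + ((1:K)/16)*α^5 + ((-1:K)/16)*α^6 + ((1:K)/16)*α^7 + ((-1:K)/16)*t + ((-13:K)/16)*t*α + ((11:K)/16)*t*α^2 + ((-9:K)/16)*t*α^3 + ((7:K)/16)*t*α^4 + ((-5:K)/16)*t*α^5 + ((3:K)/16)*t*α^6 + ((-1:K)/16)*t*α^7 + ((-69:K)/16)*t^2 + ((57:K)/16)*t^2*α + ((-49:K)/16)*t^2*α^2 + ((29:K)/16)*t^2*α^3 + ((-13:K)/16)*t^2*α^4 + ((1:K)/16)*t^2*α^5 + ((7:K)/16)*t^2*α^6 + ((-11:K)/16)*t^2*α^7 +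 ((415:K)/16)*t^3 + ((-205:K)/16)*t^3*α + ((95:K)/16)*t^3*α^2 + ((-29:K)/16)*t^3*α^3 + ((-17:K)/16)*t^3*α^4 + ((35:K)/16)*t^3*α^5 + ((-33:K)/16)*t^3*α^6 + ((19:K)/16)*t^3*α^7 + ((-785:K)/16)*t^4 + ((505:K)/16)*t^4*α + ((-105:K)/16)*t^4*α^2 + ((-63:K)/16)*t^4*α^3 + ((95:K)/16)*t^4*α^4 + ((-71:K)/16)*t^4*α^5 + ((23:K)/16)*t^4*α^6 + ((17:K)/16)*t^4*α^7 + ((567:K)/16)*t^5 + ((-597:K)/16)*t^5*α + ((107:K)/16)*t^5*α^2 + ((167:K)/16)*t^5*α^3 + ((-145:K)/16)*t^5*α^4 + ((35:K)/16)*t^5*α^5 + ((35:K)/16)*t^5*α^6 + ((-49:K)/16)*t^5*α^7 + ((-133:K)/16)*t^6 + ((241:K)/16)*t^6*α + ((-57:K)/16)*t^6*α^2 + ((-99:K)/16)*t^6*α^3 + ((83:K)/16)*t^6*α^4 + ((9:K)/16)*t^6*α^5 + ((-49:K)/16)*t^6*α^6 + ((21:K)/16)*t^6*α^7 + ((23:K)/16)*t^7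 + ((11:K)/16)*t^7*α + ((-17:K)/16)*t^7*α^2 + ((3:K)/16)*t^7*α^3 + ((7:K)/16)*t^7*α^4 + ((-5:K)/16)*t^7*α^5 + ((-1:K)/16)*t^7*α^6 + ((3:K)/16)*t^7*α^7) * ht + (((1:K)/16) + ((-1:K)/16)*t + ((-1:K)/16)*t*α + ((-13:K)/16)*t^2 + ((1:K)/16)*t^2*α + ((23:K)/16)*t^3 + ((11:K)/16)*t^3*α + ((31:K)/16)*t^4 + ((-19:K)/16)*t^4*α + ((-89:K)/16)*t^5 + ((-17:K)/16)*t^5*α + ((35:K)/16)*t^6 + ((49:K)/16)*t^6*α + ((31:K)/16)*t^7 + ((-21:K)/16)*t^7*α + ((-1:K)/8)*t^8 + ((-3:K)/16)*t^8*α) * hα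
  · -- (α²-α+2)/(-α+1)
    have ht : ((α ^ 2 - α + 2) / (-α + 1)) * (-α + 1) = α ^ 2 - α + 2 := div_mul_cancel₀ _ h4
    set t := (α ^ 2 - α + 2) / (-α + 1) with hxdef
    refine ⟨(X^8 - X^7 - 8*X^6 - 13*X^5 + 130*X^4 - 217*X^3 + 112*X^2 + 11*X + 1 : Polynomial ℤ), by monicity!, ?_⟩
    simp only [Polynomial.eval₂_add, Polynomial.eval₂_sub, Polynomial.eval₂_mul,
      Polynomial.eval₂_pow, Polynomial.eval₂_X, Polynomial.eval₂_one, Polynomial.eval₂_ofNat]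
    linear_combination (((-23:K)/16) + ((11:K)/16)*α + ((17:K)/16)*α^2 + ((3:K)/16)*α^3 + ((-7:K)/16)*α^4 + ((-5:K)/16)*α^5 + ((1:K)/16)*α^6 + ((3:K)/16)*α^7 + ((133:K)/16)*t + ((241:K)/16)*t*α + ((57:K)/16)*t*α^2 + ((-99:K)/16)*t*α^3 + ((-83:K)/16)*t*α^4 + ((9:K)/16)*t*α^5 + ((49:K)/16)*t*α^6 + ((21:K)/16)*t*α^7 + ((-567:K)/16)*t^2 + ((-597:K)/16)*t^2*α + ((-107:K)/16)*t^2*α^2 + ((167:K)/16)*t^2*α^3 + ((145:K)/16)*t^2*α^4 + ((35:K)/16)*t^2*α^5 + ((-35:K)/16)*t^2*α^6 + ((-49:K)/16)*t^2*α^7 + ((785:K)/16)*t^3 + ((505:K)/16)*t^3*α + ((105:K)/16)*t^3*α^2 + ((-63:K)/16)*t^3*α^3 + ((-95:K)/16)*t^3*α^4 + ((-71:K)/16)*t^3*α^5 + ((-23:K)/16)*t^3*α^6 + ((17:K)/16)*t^3*α^7 + ((-415:K)/16)*t^4 + ((-205:K)/16)*t^4*α + ((-95:K)/16)*t^4*α^2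 + ((-29:K)/16)*t^4*α^3 + ((17:K)/16)*t^4*α^4 + ((35:K)/16)*t^4*α^5 + ((33:K)/16)*t^4*α^6 + ((19:K)/16)*t^4*α^7 + ((69:K)/16)*t^5 + ((57:K)/16)*t^5*α + ((49:K)/16)*t^5*α^2 + ((29:K)/16)*t^5*α^3 + ((13:K)/16)*t^5*α^4 + ((1:K)/16)*t^5*α^5 + ((-7:K)/16)*t^5*α^6 + ((-11:K)/16)*t^5*α^7 + ((1:K)/16)*t^6 + ((-13:K)/16)*t^6*α + ((-11:K)/16)*t^6*α^2 + ((-9:K)/16)*t^6*α^3 + ((-7:K)/16)*t^6*α^4 + ((-5:K)/16)*t^6*α^5 + ((-3:K)/16)*t^6*α^6 + ((-1:K)/16)*t^6*α^7 + ((1:K)/16)*t^7 + ((1:K)/16)*t^7*α + ((1:K)/16)*t^7*α^2 + ((1:K)/16)*t^7*α^3 + ((1:K)/16)*t^7*α^4 + ((1:K)/16)*t^7*α^5 + ((1:K)/16)*t^7*α^6 + ((1:K)/16)*t^7*α^7) * ht + (((-1:K)/8) + ((3:K)/16)*α + ((31:K)/16)*t + ((21:K)/16)*t*α + ((35:K)/16)*t^2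 + ((-49:K)/16)*t^2*α + ((-89:K)/16)*t^3 + ((17:K)/16)*t^3*α + ((31:K)/16)*t^4 + ((19:K)/16)*t^4*α + ((23:K)/16)*t^5 + ((-11:K)/16)*t^5*α + ((-13:K)/16)*t^6 + ((-1:K)/16)*t^6*α + ((-1:K)/16)*t^7 + ((1:K)/16)*t^7*α + ((1:K)/16)*t^8) * hα
  · -- inverse
    rw [inv_div]
    have ht : ((-α + 1) / (α ^ 2 - α + 2)) * (α ^ 2 - α + 2) = -α + 1 := div_mul_cancel₀ _ h5
    set t := (-α + 1) / (α ^ 2 - α + 2) with hxdef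
    refine ⟨(X^8 + 11*X^7 + 112*X^6 - 217*X^5 + 130*X^4 - 13*X^3 - 8*X^2 - X + 1 : Polynomial ℤ), by monicity!, ?_⟩
    simp only [Polynomial.eval₂_add, Polynomial.eval₂_sub, Polynomial.eval₂_mul,
      Polynomial.eval₂_pow, Polynomial.eval₂_X, Polynomial.eval₂_one, Polynomial.eval₂_ofNat]
    linear_combination (((-1:K)/16) + ((-1:K)/16)*α + ((-1:K)/16)*α^2 + ((-1:K)/16)*α^3 + ((-1:K)/16)*α^4 + ((-1:K)/16)*α^5 + ((-1:K)/16)*α^6 + ((-1:K)/16)*α^7 + ((-1:K)/16)*t + ((13:K)/16)*t*α + ((11:K)/16)*t*α^2 + ((9:K)/16)*t*α^3 + ((7:K)/16)*t*α^4 + ((5:K)/16)*t*α^5 + ((3:K)/16)*t*α^6 + ((1:K)/16)*t*α^7 + ((-69:K)/16)*t^2 + ((-57:K)/16)*t^2*α + ((-49:K)/16)*t^2*α^2 + ((-29:K)/16)*t^2*α^3 + ((-13:K)/16)*t^2*α^4 + ((-1:K)/16)*t^2*α^5 + ((7:K)/16)*t^2*α^6 + ((11:K)/16)*t^2*α^7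 + ((415:K)/16)*t^3 + ((205:K)/16)*t^3*α + ((95:K)/16)*t^3*α^2 + ((29:K)/16)*t^3*α^3 + ((-17:K)/16)*t^3*α^4 + ((-35:K)/16)*t^3*α^5 + ((-33:K)/16)*t^3*α^6 + ((-19:K)/16)*t^3*α^7 + ((-785:K)/16)*t^4 + ((-505:K)/16)*t^4*α + ((-105:K)/16)*t^4*α^2 + ((63:K)/16)*t^4*α^3 + ((95:K)/16)*t^4*α^4 + ((71:K)/16)*t^4*α^5 + ((23:K)/16)*t^4*α^6 + ((-17:K)/16)*t^4*α^7 + ((567:K)/16)*t^5 + ((597:K)/16)*t^5*α + ((107:K)/16)*t^5*α^2 + ((-167:K)/16)*t^5*α^3 + ((-145:K)/16)*t^5*α^4 + ((-35:K)/16)*t^5*α^5 + ((35:K)/16)*t^5*α^6 + ((49:K)/16)*t^5*α^7 + ((-133:K)/16)*t^6 + ((-241:K)/16)*t^6*α + ((-57:K)/16)*t^6*α^2 + ((99:K)/16)*t^6*α^3 + ((83:K)/16)*t^6*α^4 + ((-9:K)/16)*t^6*α^5 + ((-49:K)/16)*t^6*α^6 + ((-21:K)/16)*t^6*α^7 + ((23:K)/16)*t^7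 + ((-11:K)/16)*t^7*α + ((-17:K)/16)*t^7*α^2 + ((-3:K)/16)*t^7*α^3 + ((7:K)/16)*t^7*α^4 + ((5:K)/16)*t^7*α^5 + ((-1:K)/16)*t^7*α^6 + ((-3:K)/16)*t^7*α^7) * ht + (((1:K)/16) + ((-1:K)/16)*t + ((1:K)/16)*t*α + ((-13:K)/16)*t^2 + ((-1:K)/16)*t^2*α + ((23:K)/16)*t^3 + ((-11:K)/16)*t^3*α + ((31:K)/16)*t^4 + ((19:K)/16)*t^4*α + ((-89:K)/16)*t^5 + ((17:K)/16)*t^5*α + ((35:K)/16)*t^6 + ((-49:K)/16)*t^6*α + ((31:K)/16)*t^7 + ((21:K)/16)*t^7*α + ((-1:K)/8)*t^8 + ((3:K)/16)*t^8*α) * hα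
end

section
/- Let K' = ℚ(β) where β⁸ = −240. Then each of the elements (β⁶ + 2β⁴ − 4β² − 56)/16, (β⁷ − 2β⁶ + 2β⁵ − 4β³ + 8β² − 8β + 64)/64, and (β⁷ − 2β⁵ + 4β⁴ − 4β³ − 32β² + 8β − 16)/64 of K' is a unit of the ring of integers 𝓞_{K'} (i.e., each lies in 𝓞_{K'} and its inverse also lies in 𝓞_{K'}). -/
open Polynomial

set_option maxHeartbeats 1000000 in
theorem aux1 (K' : Type*) [Field K'] [CharZero K'] (β : K') (hβ : β ^ 8 = -240) :
    IsIntegral ℤ ((β ^ 6 + 2 * β ^ 4 - 4 * β ^ 2 - 56) / 16) ∧ IsIntegral ℤ ((β ^ 6 + 2 * β ^ 4 - 4 * β ^ 2 - 56) / 16)⁻¹ := by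
  have hv : ((β ^ 6 + 2 * β ^ 4 - 4 * β ^ 2 - 56) / 16)⁻¹ = ((-1 : K')/16) * β ^ 6 + ((1 : K')/8) * β ^ 4 + ((1 : K')/4) * β ^ 2 + ((-7 : K')/2) := by
    apply inv_eq_of_mul_eq_one_right
    linear_combination (((-1 : K')/256) * β ^ 4 + ((3 : K')/64)) * hβ
  constructor
  · refine ⟨X ^ 4 + C 14 * X ^ 3 + C 66 * X ^ 2 + C 14 * X + C 1, ?_, ?_⟩
    · monicity!
    · simp only [eval₂_add, eval₂_sub, eval₂_mul, eval₂_pow, eval₂_X, eval₂_C, eval₂_one]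
      simp only [algebraMap_int_eq, eq_intCast]
      push_cast
      linear_combination (((1 : K')/65536) * β ^ 16 + ((1 : K')/8192) * β ^ 14 + ((1 : K')/8192) * β ^ 12 + ((-1 : K')/1024) * β ^ 10 + ((-5 : K')/1024) * β ^ 8 + ((-13 : K')/512) * β ^ 6 + ((-29 : K')/512) * β ^ 4 + ((7 : K')/64) * β ^ 2 + ((331 : K')/256)) * hβ
  · rw [hv]
    refine ⟨X ^ 4 + C 14 * X ^ 3 + C 66 * X ^ 2 + C 14 * X + C 1, ?_, ?_⟩
    · monicity!
    · simp only [eval₂_add, eval₂_sub, eval₂_mul, eval₂_pow, eval₂_X, eval₂_C, eval₂_one]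
      simp only [algebraMap_int_eq, eq_intCast]
      push_cast
      linear_combination (((1 : K')/65536) * β ^ 16 + ((-1 : K')/8192) * β ^ 14 + ((1 : K')/8192) * β ^ 12 + ((1 : K')/1024) * β ^ 10 + ((-5 : K')/1024) * β ^ 8 + ((13 : K')/512) * β ^ 6 + ((-29 : K')/512) * β ^ 4 + ((-7 : K')/64) * β ^ 2 + ((331 : K')/256)) * hβ

set_option maxHeartbeats 1000000 in
theorem aux2 (K' : Type*) [Field K'] [CharZero K'] (β : K') (hβ : β ^ 8 = -240) :
    IsIntegral ℤ ((β ^ 7 - 2 * β ^ 6 + 2 * β ^ 5 - 4 * β ^ 3 + 8 * β ^ 2 - 8 * β + 64) / 64) ∧ IsIntegral ℤ ((β ^ 7 - 2 * β ^ 6 + 2 * β ^ 5 - 4 * β ^ 3 + 8 * β ^ 2 - 8 * β + 64) / 64)⁻¹ := by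
  have hv : ((β ^ 7 - 2 * β ^ 6 + 2 * β ^ 5 - 4 * β ^ 3 + 8 * β ^ 2 - 8 * β + 64) / 64)⁻¹ = ((-1 : K')/64) * β ^ 7 + ((-1 : K')/32) * β ^ 6 + ((-1 : K')/32) * β ^ 5 + ((1 : K')/16) * β ^ 3 + ((1 : K')/8) * β ^ 2 + ((1 : K')/8) * β + (1 : K') := by
    apply inv_eq_of_mul_eq_one_right
    linear_combination (((-1 : K')/4096) * β ^ 6 + ((1 : K')/1024) * β ^ 2) * hβ
  constructor
  · refine ⟨X ^ 8 + C (-8) * X ^ 7 + C 13 * X ^ 6 + C 4 * X ^ 5 + C 220 * X ^ 4 + C 4 * X ^ 3 + C 13 * X ^ 2 + C (-8) * X + C 1, ?_, ?_⟩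
    · monicity!
    · simp only [eval₂_add, eval₂_sub, eval₂_mul, eval₂_pow, eval₂_X, eval₂_C, eval₂_one]
      simp only [algebraMap_int_eq, eq_intCast]
      push_cast
      linear_combination (((1 : K')/281474976710656) * β ^ 48 + ((-1 : K')/17592186044416) * β ^ 47 + ((1 : K')/2199023255552) * β ^ 46 + ((-21 : K')/8796093022208) * β ^ 45 + ((159 : K')/17592186044416) * β ^ 44 + ((-111 : K')/4398046511104) * β ^ 43 + ((27 : K')/549755813888) * β ^ 42 + ((-99 : K')/2199023255552) * β ^ 41 + ((-1805 : K')/17592186044416) * β ^ 40 + ((21 : K')/34359738368) * β ^ 39 + ((-29 : K')/17179869184) * β ^ 38 + ((109 : K')/34359738368) * β ^ 37 + ((-2199 : K')/549755813888) * β ^ 36 + ((63 : K')/34359738368) * β ^ 35 + ((465 : K')/68719476736) * β ^ 34 + ((-219 : K')/8589934592) * β ^ 33 + ((31001 : K')/549755813888) * β ^ 32 + ((-3297 : K')/34359738368) * β ^ 31 + ((2289 : K')/17179869184) * β ^ 30 + ((-2961 : K')/17179869184) * β ^ 29 + ((1351 : K')/4294967296) * β ^ 28 + ((-7455 : K')/8589934592)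 * β ^ 27 + ((9549 : K')/4294967296) * β ^ 26 + ((-17079 : K')/4294967296) * β ^ 25 + ((103319 : K')/34359738368) * β ^ 24 + ((1161 : K')/134217728) * β ^ 23 + ((-47691 : K')/1073741824) * β ^ 22 + ((32865 : K')/268435456) * β ^ 21 + ((-541417 : K')/2147483648) * β ^ 20 + ((25953 : K')/67108864) * β ^ 19 + ((-90981 : K')/268435456) * β ^ 18 + ((-18153 : K')/67108864) * β ^ 17 + ((8031037 : K')/4294967296) * β ^ 16 + ((-1221429 : K')/268435456) * β ^ 15 + ((545145 : K')/67108864) * β ^ 14 + ((-1476801 : K')/134217728) * β ^ 13 + ((2433777 : K')/268435456) * β ^ 12 + ((269989 : K')/67108864) * β ^ 11 + ((-557039 : K')/16777216) * β ^ 10 + ((2490057 : K')/33554432) * β ^ 9 + ((-28990865 : K')/268435456) * β ^ 8 + ((298407 : K')/2097152) * β ^ 7 + ((-483921 : K')/4194304) * β ^ 6 + ((-1263 : K')/262144) * β ^ 5 + ((13839 : K')/65536) * β ^ 4 + ((-57 : K')/128) * β ^ 3 + ((19 : K')/32) * β ^ 2 + ((-1 : K')/2) * β + (1 : K')) * hβ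
  · rw [hv]
    refine ⟨X ^ 8 + C (-8) * X ^ 7 + C 13 * X ^ 6 + C 4 * X ^ 5 + C 220 * X ^ 4 + C 4 * X ^ 3 + C 13 * X ^ 2 + C (-8) * X + C 1, ?_, ?_⟩
    · monicity!
    · simp only [eval₂_add, eval₂_sub, eval₂_mul, eval₂_pow, eval₂_X, eval₂_C, eval₂_one]
      simp only [algebraMap_int_eq, eq_intCast]
      push_cast
      linear_combination (((1 : K')/281474976710656) * β ^ 48 + ((1 : K')/17592186044416) * β ^ 47 + ((1 : K')/2199023255552) * β ^ 46 + ((21 : K')/8796093022208) * β ^ 45 + ((159 : K')/17592186044416) * β ^ 44 + ((111 : K')/4398046511104) * β ^ 43 + ((27 : K')/549755813888) * β ^ 42 + ((99 : K')/2199023255552) * β ^ 41 + ((-1805 : K')/17592186044416) * β ^ 40 + ((-21 : K')/34359738368) * β ^ 39 + ((-29 : K')/17179869184) * β ^ 38 + ((-109 : K')/34359738368) * β ^ 37 + ((-2199 : K')/549755813888) * β ^ 36 + ((-63 : K')/34359738368) * β ^ 35 + ((465 : K')/68719476736) * β ^ 34 + ((219 : K')/8589934592) * β ^ 33 + ((31001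 : K')/549755813888) * β ^ 32 + ((3297 : K')/34359738368) * β ^ 31 + ((2289 : K')/17179869184) * β ^ 30 + ((2961 : K')/17179869184) * β ^ 29 + ((1351 : K')/4294967296) * β ^ 28 + ((7455 : K')/8589934592) * β ^ 27 + ((9549 : K')/4294967296) * β ^ 26 + ((17079 : K')/4294967296) * β ^ 25 + ((103319 : K')/34359738368) * β ^ 24 + ((-1161 : K')/134217728) * β ^ 23 + ((-47691 : K')/1073741824) * β ^ 22 + ((-32865 : K')/268435456) * β ^ 21 + ((-541417 : K')/2147483648) * β ^ 20 + ((-25953 : K')/67108864) * β ^ 19 + ((-90981 : K')/268435456) * β ^ 18 + ((18153 : K')/67108864) * β ^ 17 + ((8031037 : K')/4294967296) * β ^ 16 + ((1221429 : K')/268435456) * β ^ 15 + ((545145 : K')/67108864) * β ^ 14 + ((1476801 : K')/134217728) * β ^ 13 + ((2433777 : K')/268435456) * β ^ 12 + ((-269989 : K')/67108864) * β ^ 11 + ((-557039 : K')/16777216) * β ^ 10 + ((-2490057 : K')/33554432) * β ^ 9 + ((-28990865 : K')/268435456) * β ^ 8 + ((-298407 : K')/2097152) * β ^ 7 + ((-483921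 : K')/4194304) * β ^ 6 + ((1263 : K')/262144) * β ^ 5 + ((13839 : K')/65536) * β ^ 4 + ((57 : K')/128) * β ^ 3 + ((19 : K')/32) * β ^ 2 + ((1 : K')/2) * β + (1 : K')) * hβ

set_option maxHeartbeats 1000000 in
theorem aux3 (K' : Type*) [Field K'] [CharZero K'] (β : K') (hβ : β ^ 8 = -240) :
    IsIntegral ℤ ((β ^ 7 - 2 * β ^ 5 + 4 * β ^ 4 - 4 * β ^ 3 - 32 * β ^ 2 + 8 * β - 16) / 64) ∧ IsIntegral ℤ ((β ^ 7 - 2 * β ^ 5 + 4 * β ^ 4 - 4 * β ^ 3 - 32 * β ^ 2 + 8 * β - 16) / 64)⁻¹ := by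
  have hv : ((β ^ 7 - 2 * β ^ 5 + 4 * β ^ 4 - 4 * β ^ 3 - 32 * β ^ 2 + 8 * β - 16) / 64)⁻¹ = ((-1 : K')/64) * β ^ 7 + ((1 : K')/32) * β ^ 5 + ((1 : K')/16) * β ^ 4 + ((1 : K')/16) * β ^ 3 + ((-1 : K')/2) * β ^ 2 + ((-1 : K')/8) * β + ((-1 : K')/4) := by
    apply inv_eq_of_mul_eq_one_right
    linear_combination (((-1 : K')/4096) * β ^ 6 + ((1 : K')/1024) * β ^ 4 + ((1 : K')/1024) * β ^ 2 + ((-1 : K')/256)) * hβ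
  constructor
  · refine ⟨X ^ 8 + C 2 * X ^ 7 + C 13 * X ^ 6 + C 134 * X ^ 5 + C 340 * X ^ 4 + C 134 * X ^ 3 + C 13 * X ^ 2 + C 2 * X + C 1, ?_, ?_⟩
    · monicity!
    · simp only [eval₂_add, eval₂_sub, eval₂_mul, eval₂_pow, eval₂_X, eval₂_C, eval₂_one]
      simp only [algebraMap_int_eq, eq_intCast]
      push_cast
      linear_combination (((1 : K')/281474976710656) * β ^ 48 + ((-1 : K')/17592186044416) * β ^ 46 + ((1 : K')/8796093022208) * β ^ 45 + ((5 : K')/17592186044416) * β ^ 44 + ((-11 : K')/4398046511104) * β ^ 43 + ((1 : K')/549755813888) * β ^ 42 + ((21 : K')/1099511627776) * β ^ 41 + ((-925 : K')/17592186044416) * β ^ 40 + ((-7 : K')/274877906944) * β ^ 39 + ((547 : K')/1099511627776) * β ^ 38 + ((-25 : K')/34359738368) * β ^ 37 + ((-521 : K')/274877906944) * β ^ 36 + ((547 : K')/68719476736) * β ^ 35 + ((-73 : K')/17179869184) * β ^ 34 + ((-1407 : K')/34359738368) * β ^ 33 + ((49937 : K')/549755813888) * β ^ 32 + ((965 : K')/17179869184)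 * β ^ 31 + ((-18995 : K')/34359738368) * β ^ 30 + ((11279 : K')/17179869184) * β ^ 29 + ((28103 : K')/17179869184) * β ^ 28 + ((-45309 : K')/8589934592) * β ^ 27 + ((5745 : K')/4294967296) * β ^ 26 + ((11055 : K')/536870912) * β ^ 25 + ((-1202009 : K')/34359738368) * β ^ 24 + ((-35727 : K')/1073741824) * β ^ 23 + ((351813 : K')/2147483648) * β ^ 22 + ((-65891 : K')/536870912) * β ^ 21 + ((-927527 : K')/2147483648) * β ^ 20 + ((247799 : K')/268435456) * β ^ 19 + ((84841 : K')/268435456) * β ^ 18 + ((-364201 : K')/134217728) * β ^ 17 + ((12658653 : K')/4294967296) * β ^ 16 + ((317595 : K')/67108864) * β ^ 15 + ((-3265641 : K')/268435456) * β ^ 14 + ((-70343 : K')/134217728) * β ^ 13 + ((5204159 : K')/268435456) * β ^ 12 + ((-1955971 : K')/67108864) * β ^ 11 + ((-261535 : K')/16777216) * β ^ 10 + ((984235 : K')/16777216) * β ^ 9 + ((-2272801 : K')/268435456) * β ^ 8 + ((-3557 : K')/2097152) * β ^ 7 + ((1067555 : K')/16777216) * β ^ 6 + ((-93327 : K')/2097152)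 * β ^ 5 + ((271177 : K')/8388608) * β ^ 4 + ((-1551 : K')/131072) * β ^ 3 + ((-2841 : K')/1048576) * β ^ 2 + ((131 : K')/131072) * β + ((1831 : K')/1048576)) * hβ
  · rw [hv]
    refine ⟨X ^ 8 + C 2 * X ^ 7 + C 13 * X ^ 6 + C 134 * X ^ 5 + C 340 * X ^ 4 + C 134 * X ^ 3 + C 13 * X ^ 2 + C 2 * X + C 1, ?_, ?_⟩
    · monicity!
    · simp only [eval₂_add, eval₂_sub, eval₂_mul, eval₂_pow, eval₂_X, eval₂_C, eval₂_one]
      simp only [algebraMap_int_eq, eq_intCast]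
      push_cast
      linear_combination (((1 : K')/281474976710656) * β ^ 48 + ((-1 : K')/17592186044416) * β ^ 46 + ((-1 : K')/8796093022208) * β ^ 45 + ((5 : K')/17592186044416) * β ^ 44 + ((11 : K')/4398046511104) * β ^ 43 + ((1 : K')/549755813888) * β ^ 42 + ((-21 : K')/1099511627776) * β ^ 41 + ((-925 : K')/17592186044416) * β ^ 40 + ((7 : K')/274877906944) * β ^ 39 + ((547 : K')/1099511627776) * β ^ 38 + ((25 : K')/34359738368) * β ^ 37 + ((-521 : K')/274877906944) * β ^ 36 + ((-547 : K')/68719476736) * β ^ 35 + ((-73 : K')/17179869184) * β ^ 34 + ((1407 : K')/34359738368) * β ^ 33 + ((49937 : K')/549755813888) * β ^ 32 + ((-965 : K')/17179869184) * β ^ 31 + ((-18995 : K')/34359738368) * β ^ 30 + ((-11279 : K')/17179869184) * β ^ 29 + ((28103 : K')/17179869184) * β ^ 28 + ((45309 : K')/8589934592) * β ^ 27 + ((5745 : K')/4294967296) * β ^ 26 + ((-11055 : K')/536870912) * β ^ 25 + ((-1202009 : K')/34359738368) * β ^ 24 + ((35727 : K')/1073741824) * β ^ 23 + ((351813 : K')/2147483648)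 * β ^ 22 + ((65891 : K')/536870912) * β ^ 21 + ((-927527 : K')/2147483648) * β ^ 20 + ((-247799 : K')/268435456) * β ^ 19 + ((84841 : K')/268435456) * β ^ 18 + ((364201 : K')/134217728) * β ^ 17 + ((12658653 : K')/4294967296) * β ^ 16 + ((-317595 : K')/67108864) * β ^ 15 + ((-3265641 : K')/268435456) * β ^ 14 + ((70343 : K')/134217728) * β ^ 13 + ((5204159 : K')/268435456) * β ^ 12 + ((1955971 : K')/67108864) * β ^ 11 + ((-261535 : K')/16777216) * β ^ 10 + ((-984235 : K')/16777216) * β ^ 9 + ((-2272801 : K')/268435456) * β ^ 8 + ((3557 : K')/2097152) * β ^ 7 + ((1067555 : K')/16777216) * β ^ 6 + ((93327 : K')/2097152) * β ^ 5 + ((271177 : K')/8388608) * β ^ 4 + ((1551 : K')/131072) * β ^ 3 + ((-2841 : K')/1048576) * β ^ 2 + ((-131 : K')/131072) * β + ((1831 : K')/1048576)) * hβ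

/-- For `K' = ℚ(β)` with `β⁸ = -240`, the elements `(β⁶+2β⁴-4β²-56)/16`,
`(β⁷-2β⁶+2β⁵-4β³+8β²-8β+64)/64` and `(β⁷-2β⁵+4β⁴-4β³-32β²+8β-16)/64` are units of the
ring of integers of `K'`: each is integral over `ℤ` and its inverse is integral over `ℤ`. -/
theorem units_of_K'
    (K' : Type*) [Field K'] [NumberField K']
    (β : K') (hβ : β ^ 8 = -240) (hgen : Algebra.adjoin ℚ {β} = ⊤) :
    (IsIntegral ℤ ((β ^ 6 + 2 * β ^ 4 - 4 * β ^ 2 - 56) / 16) ∧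
      IsIntegral ℤ ((β ^ 6 + 2 * β ^ 4 - 4 * β ^ 2 - 56) / 16)⁻¹) ∧
    (IsIntegral ℤ
        ((β ^ 7 - 2 * β ^ 6 + 2 * β ^ 5 - 4 * β ^ 3 + 8 * β ^ 2 - 8 * β + 64) / 64) ∧
      IsIntegral ℤ
        ((β ^ 7 - 2 * β ^ 6 + 2 * β ^ 5 - 4 * β ^ 3 + 8 * β ^ 2 - 8 * β + 64) / 64)⁻¹) ∧
    (IsIntegral ℤ
        ((β ^ 7 - 2 * β ^ 5 + 4 * β ^ 4 - 4 * β ^ 3 - 32 * β ^ 2 + 8 * β - 16) / 64) ∧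
      IsIntegral ℤ
        ((β ^ 7 - 2 * β ^ 5 + 4 * β ^ 4 - 4 * β ^ 3 - 32 * β ^ 2 + 8 * β - 16) / 64)⁻¹) := by
  exact ⟨aux1 K' β hβ, aux2 K' β hβ, aux3 K' β hβ⟩
end

section
/- Let K' = ℚ(β) with β⁸ = −240, let U' = 𝓞_{K'}ˣ, and let U₀' be the subgroup of U' generated by −1, u₁ = (β⁶ + 2β⁴ − 4β² − 56)/16, u₂ = (β⁷ − 2β⁶ + 2β⁵ − 4β³ + 8β² − 8β + 64)/64, and u₃ = (β⁷ − 2β⁵ + 4β⁴ − 4β³ − 32β² + 8β − 16)/64. Then U₀' ∩ (U')² = (U₀')², i.e., every element of U₀' that is the square of a unit of 𝓞_{K'} is the square of an element of U₀'. -/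
open NumberField Polynomial

lemma monic_f : ((X : ℤ[X])^8 + C 240).Monic :=
  Polynomial.monic_X_pow_add_C _ (by norm_num)

lemma monic_fQ : ((X : ℚ[X])^8 + C 240).Monic :=
  Polynomial.monic_X_pow_add_C _ (by norm_num)

-- Irreducibility of X^8 + 240 over ℚ (Eisenstein at 3)
lemma irr_f : Irreducible ((X : ℚ[X])^8 + C 240) := by
  have hprim : ((X : ℤ[X])^8 + C 240).IsPrimitive := monic_f.isPrimitive
  have hirrZ : Irreducible ((X : ℤ[X])^8 + C 240) := by
    apply irreducible_of_eisenstein_criterion (P := Ideal.span {(3 : ℤ)})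
    · rw [Ideal.span_singleton_prime (by norm_num)]; norm_num
    · rw [monic_f.leadingCoeff]
      rw [Ideal.mem_span_singleton]
      norm_num
    · intro n hn
      rw [Polynomial.degree_X_pow_add_C (by norm_num)] at hn
      have hn8 : n < 8 := by exact_mod_cast hn
      have hne8 : ¬ n = 8 := by omega
      simp only [Polynomial.coeff_add, Polynomial.coeff_X_pow, Polynomial.coeff_C,
        hne8, if_false, zero_add, Ideal.mem_span_singleton]
      rcases Nat.eq_zero_or_pos n with h | h
      · subst h; norm_num
      · have hne : ¬ n = 0 := by omega
        simp [hne]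
    · rw [Polynomial.degree_X_pow_add_C (by norm_num)]; norm_num
    · simp only [Polynomial.coeff_add, Polynomial.coeff_X_pow, Polynomial.coeff_C]
      rw [Ideal.span_singleton_pow, Ideal.mem_span_singleton]
      norm_num
    · exact hprim
  have := (Polynomial.IsPrimitive.Int.irreducible_iff_irreducible_map_cast hprim).mp hirrZ
  rwa [Polynomial.map_add, Polynomial.map_pow, Polynomial.map_X, Polynomial.map_C] at this

lemma padic_coe_ofNat (p : ℕ) [Fact p.Prime] (n : ℕ) [n.AtLeastTwo] :
    ((OfNat.ofNat n : ℤ_[p]) : ℚ_[p]) = OfNat.ofNat n := by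
  rw [← Nat.cast_ofNat (R := ℤ_[p]), PadicInt.coe_natCast, Nat.cast_ofNat]

lemma key (p : ℕ) [hp : Fact p.Prime] (hp2 : p ≠ 2) (r₀ : ℤ)
    (hroot : (p:ℤ) ∣ r₀^8 + 240) (hr₀ : ¬ (p:ℤ) ∣ r₀)
    (K' : Type*) [Field K'] [CharZero K'] (β : K') (hβ : β ^ 8 = -240)
    (hgen : Algebra.adjoin ℚ {β} = ⊤)
    (γ : K') (a b c d : ℕ)
    (heq : (-1)^a * ((β^6+2*β^4-4*β^2-56)/16)^b
        * ((β^7-2*β^6+2*β^5-4*β^3+8*β^2-8*β+64)/64)^c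
        * ((β^7-2*β^5+4*β^4-4*β^3-32*β^2+8*β-16)/64)^d = γ^2) :
    ∃ t : ZMod p, t^2 = (-1)^a * ((r₀:ZMod p)^6+2*(r₀:ZMod p)^4-4*(r₀:ZMod p)^2-56)^b
        * ((r₀:ZMod p)^7-2*(r₀:ZMod p)^6+2*(r₀:ZMod p)^5-4*(r₀:ZMod p)^3+8*(r₀:ZMod p)^2-8*(r₀:ZMod p)+64)^c
        * ((r₀:ZMod p)^7-2*(r₀:ZMod p)^5+4*(r₀:ZMod p)^4-4*(r₀:ZMod p)^3-32*(r₀:ZMod p)^2+8*(r₀:ZMod p)-16)^d := by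
  -- minimal polynomial
  have hint : IsIntegral ℚ β := by
    refine ⟨X^8 + C 240, monic_fQ, ?_⟩
    simp [hβ]
  have haev : (Polynomial.aeval β) ((X : ℚ[X])^8 + C 240) = 0 := by
    simp [hβ]
  have hmin : minpoly ℚ β = (X : ℚ[X])^8 + C 240 :=
    (minpoly.eq_of_irreducible_of_monic irr_f haev monic_fQ).symm
  -- Hensel root
  have hF : ∃ ζ : ℤ_[p], ζ^8 = -240 ∧ PadicInt.toZMod ζ = (r₀ : ZMod p) := by
    set F : Polynomial ℤ_[p] := X^8 + C 240 with hFdef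
    have hder : F.derivative = C 8 * X^7 := by
      simp [hFdef, Polynomial.derivative_X_pow]
      rw [← C_1, ← C_add]; norm_num
    have hevder : F.derivative.eval (r₀ : ℤ_[p]) = ((8 * r₀^7 : ℤ) : ℤ_[p]) := by
      rw [hder]
      push_cast
      simp
    have hnd : ¬ (p : ℤ) ∣ 8 * r₀^7 := by
      intro hdvd
      have hpZ : Prime (p : ℤ) := Int.prime_iff_natAbs_prime.mpr (by simpa using hp.out)
      rcases hpZ.dvd_mul.mp hdvd with h8 | h7
      · have : (p:ℤ) ∣ 2^3 := by norm_num at h8 ⊢; exact h8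
        have := hpZ.dvd_of_dvd_pow this
        have : p ∣ 2 := by exact_mod_cast this
        have := (Nat.prime_dvd_prime_iff_eq hp.out Nat.prime_two).mp this
        exact hp2 this
      · exact hr₀ (hpZ.dvd_of_dvd_pow h7)
    have hnormder : ‖F.derivative.eval (r₀ : ℤ_[p])‖ = 1 := by
      rw [hevder]
      rcases lt_or_eq_of_le (PadicInt.norm_le_one ((8 * r₀^7 : ℤ) : ℤ_[p])) with h | h
      · exact absurd ((PadicInt.norm_int_lt_one_iff_dvd _).mp h) hnd
      · exact h
    have hevF : F.eval (r₀ : ℤ_[p]) = ((r₀^8 + 240 : ℤ) : ℤ_[p]) := by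
      simp only [hFdef, Polynomial.eval_add, Polynomial.eval_pow, Polynomial.eval_X,
        Polynomial.eval_C]
      push_cast
      ring
    have hnorm : ‖F.eval (r₀ : ℤ_[p])‖ < ‖F.derivative.eval (r₀ : ℤ_[p])‖ ^ 2 := by
      rw [hnormder, hevF, one_pow]
      exact (PadicInt.norm_int_lt_one_iff_dvd _).mpr hroot
    obtain ⟨ζ, hζ0, hζr, -, -⟩ := hensels_lemma hnorm
    refine ⟨ζ, ?_, ?_⟩
    · have h0 : ζ^8 + 240 = 0 := by simpa [hFdef] using hζ0
      exact eq_neg_of_add_eq_zero_left h0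
    · rw [Polynomial.coe_aeval_eq_eval] at hζr
      rw [hnormder] at hζr
      have hdv : (p : ℤ_[p]) ∣ ζ - (r₀ : ℤ_[p]) := (PadicInt.norm_lt_one_iff_dvd _).mp hζr
      have hker : PadicInt.toZMod (ζ - (r₀ : ℤ_[p])) = 0 := by
        rw [← RingHom.mem_ker, PadicInt.ker_toZMod, PadicInt.maximalIdeal_eq_span_p,
          Ideal.mem_span_singleton]
        exact hdv
      have hsub := map_sub (PadicInt.toZMod (p := p)) ζ (r₀ : ℤ_[p])
      rw [hker] at hsub
      have h2 : PadicInt.toZMod ((r₀ : ℤ_[p])) = (r₀ : ZMod p) := map_intCast _ _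
      rw [h2] at hsub
      exact eq_of_sub_eq_zero hsub.symm
  obtain ⟨ζ, hζ8, hζmod⟩ := hF
  -- the embedding K' →ₐ[ℚ] ℚ_[p] sending β to ζ
  let e : (Algebra.adjoin ℚ ({β} : Set K')) ≃ₐ[ℚ] K' :=
    (Subalgebra.equivOfEq _ _ hgen).trans Subalgebra.topEquiv
  let pb : PowerBasis ℚ K' := (Algebra.adjoin.powerBasis hint).map e
  have hgenβ : pb.gen = β := by
    simp [pb, e, PowerBasis.map_gen, Algebra.adjoin.powerBasis_gen]
  have hy : (Polynomial.aeval ((ζ : ℚ_[p]))) (minpoly ℚ pb.gen) = 0 := by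
    rw [hgenβ, hmin]
    simp only [map_add, map_pow, Polynomial.aeval_X, Polynomial.aeval_C]
    have hcast : ((ζ : ℚ_[p]))^8 = ((ζ^8 : ℤ_[p]) : ℚ_[p]) := by push_cast; ring
    rw [hcast, hζ8]
    have h240 : ((240:ℤ_[p]):ℚ_[p]) = 240 := rfl
    rw [map_ofNat, PadicInt.coe_neg, h240]
    ring
  let φ : K' →ₐ[ℚ] ℚ_[p] := pb.lift ((ζ : ℚ_[p])) hy
  have hφβ : φ β = (ζ : ℚ_[p]) := by rw [← hgenβ]; exact pb.lift_gen _ hy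
  have H := congrArg φ heq
  simp only [map_mul, map_pow, map_div₀, map_add, map_sub, map_neg, map_one, map_ofNat,
    hφβ] at H
  set z : ℚ_[p] := (ζ : ℚ_[p]) with hz
  have H2 : ((-1:ℚ_[p])^a * (z^6+2*z^4-4*z^2-56)^b
      * (z^7-2*z^6+2*z^5-4*z^3+8*z^2-8*z+64)^c
      * (z^7-2*z^5+4*z^4-4*z^3-32*z^2+8*z-16)^d)
      = (φ γ * 4^b * 8^c * 8^d)^2 := by
    have k1 : ((4:ℚ_[p])^b)^2 = 16^b := by rw [pow_right_comm]; norm_num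
    have k2 : ((8:ℚ_[p])^c)^2 = 64^c := by rw [pow_right_comm]; norm_num
    have k3 : ((8:ℚ_[p])^d)^2 = 64^d := by rw [pow_right_comm]; norm_num
    have h16 : ((16:ℚ_[p])) ≠ 0 := by norm_num
    have h64 : ((64:ℚ_[p])) ≠ 0 := by norm_num
    rw [mul_pow, mul_pow, mul_pow, k1, k2, k3, ← H, div_pow, div_pow, div_pow]
    field_simp
  set ω : ℤ_[p] := (-1)^a * (ζ^6+2*ζ^4-4*ζ^2-56)^b
      * (ζ^7-2*ζ^6+2*ζ^5-4*ζ^3+8*ζ^2-8*ζ+64)^c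
      * (ζ^7-2*ζ^5+4*ζ^4-4*ζ^3-32*ζ^2+8*ζ-16)^d with hω
  have hωcoe : ((ω : ℚ_[p])) = ((-1:ℚ_[p])^a * (z^6+2*z^4-4*z^2-56)^b
      * (z^7-2*z^6+2*z^5-4*z^3+8*z^2-8*z+64)^c
      * (z^7-2*z^5+4*z^4-4*z^3-32*z^2+8*z-16)^d) := by
    rw [hω]
    push_cast
    norm_cast
  set δ : ℚ_[p] := φ γ * 4^b * 8^c * 8^d with hδ
  have hδnorm : ‖δ‖ ≤ 1 := by
    have h1 : ‖δ‖^2 = ‖ω‖ := by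
      rw [← norm_pow, ← H2, ← hωcoe]
      exact PadicInt.padic_norm_e_of_padicInt ω
    nlinarith [PadicInt.norm_le_one ω, norm_nonneg δ]
  set δ' : ℤ_[p] := ⟨δ, hδnorm⟩ with hδ'
  have hδ'2 : δ'^2 = ω := by
    apply Subtype.ext
    show (δ'^2 : ℤ_[p]).val = ω.val
    have hval : (δ'^2 : ℤ_[p]).val = δ^2 := by push_cast [hδ']; rfl
    rw [hval, ← H2, ← hωcoe]
  refine ⟨PadicInt.toZMod δ', ?_⟩
  have hfin := congrArg (PadicInt.toZMod (p := p)) hδ'2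
  rw [map_pow] at hfin
  rw [hfin, hω]
  simp only [map_mul, map_pow, map_neg, map_one, map_add, map_sub, map_ofNat, hζmod]
  try ring

lemma closure_repr {G : Type*} [CommGroup G] (g₁ g₂ g₃ g₄ : G) {x : G}
    (hx : x ∈ Subgroup.closure {g₁, g₂, g₃, g₄}) :
    ∃ a b c d : ℤ, x = g₁ ^ a * g₂ ^ b * g₃ ^ c * g₄ ^ d := by
  induction hx using Subgroup.closure_induction with
  | mem y hy =>
    simp only [Set.mem_insert_iff, Set.mem_singleton_iff] at hy
    rcases hy with rfl | rfl | rfl | rfl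
    · exact ⟨1, 0, 0, 0, by simp⟩
    · exact ⟨0, 1, 0, 0, by simp⟩
    · exact ⟨0, 0, 1, 0, by simp⟩
    · exact ⟨0, 0, 0, 1, by simp⟩
  | one => exact ⟨0, 0, 0, 0, by simp⟩
  | mul y z _ _ hy hz =>
    obtain ⟨a, b, c, d, rfl⟩ := hy
    obtain ⟨a', b', c', d', rfl⟩ := hz
    refine ⟨a + a', b + b', c + c', d + d', ?_⟩
    simp only [zpow_add]
    simp [mul_assoc, mul_left_comm, mul_comm]
  | inv y _ hy =>
    obtain ⟨a, b, c, d, rfl⟩ := hy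
    refine ⟨-a, -b, -c, -d, ?_⟩
    simp [zpow_neg, mul_inv, mul_assoc, mul_left_comm, mul_comm]

instance fact19 : Fact (Nat.Prime 19) := ⟨by norm_num⟩
instance fact23 : Fact (Nat.Prime 23) := ⟨by norm_num⟩
instance fact31 : Fact (Nat.Prime 31) := ⟨by norm_num⟩
instance fact47 : Fact (Nat.Prime 47) := ⟨by norm_num⟩

/-- For `K' = ℚ(β)` with `β⁸ = -240` and `U₀'` the subgroup of the unit group
`U' = 𝓞_{K'}ˣ` generated by `-1` and the three listed units, one has
`U₀' ∩ (U')² = (U₀')²`: an element of `U₀'` is the square of a unit of `𝓞_{K'}`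
if and only if it is the square of an element of `U₀'`. -/
theorem inter_squares_eq_squares
    (K' : Type*) [Field K'] [NumberField K']
    (β : K') (hβ : β ^ 8 = -240) (hgen : Algebra.adjoin ℚ {β} = ⊤)
    (u₁ u₂ u₃ : (𝓞 K')ˣ)
    (hu₁ : algebraMap (𝓞 K') K' u₁.val =
      (β ^ 6 + 2 * β ^ 4 - 4 * β ^ 2 - 56) / 16)
    (hu₂ : algebraMap (𝓞 K') K' u₂.val =
      (β ^ 7 - 2 * β ^ 6 + 2 * β ^ 5 - 4 * β ^ 3 + 8 * β ^ 2 - 8 * β + 64) / 64)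
    (hu₃ : algebraMap (𝓞 K') K' u₃.val =
      (β ^ 7 - 2 * β ^ 5 + 4 * β ^ 4 - 4 * β ^ 3 - 32 * β ^ 2 + 8 * β - 16) / 64) :
    {x : (𝓞 K')ˣ | x ∈ Subgroup.closure {-1, u₁, u₂, u₃} ∧ ∃ y : (𝓞 K')ˣ, y ^ 2 = x} =
      {x : (𝓞 K')ˣ | ∃ y ∈ Subgroup.closure {-1, u₁, u₂, u₃}, y ^ 2 = x} := by
  ext x
  simp only [Set.mem_setOf_eq]
  constructor
  · rintro ⟨hxmem, y, hy⟩
    obtain ⟨a, b, c, d, hx⟩ := closure_repr (-1) u₁ u₂ u₃ hxmem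
    have h1 : (-1 : (𝓞 K')ˣ) ∈ Subgroup.closure {-1, u₁, u₂, u₃} :=
      Subgroup.subset_closure (by simp)
    have h2 : u₁ ∈ Subgroup.closure {-1, u₁, u₂, u₃} :=
      Subgroup.subset_closure (by simp)
    have h3 : u₂ ∈ Subgroup.closure {-1, u₁, u₂, u₃} :=
      Subgroup.subset_closure (by simp)
    have h4 : u₃ ∈ Subgroup.closure {-1, u₁, u₂, u₃} :=
      Subgroup.subset_closure (by simp)
    set t : (𝓞 K')ˣ := (-1)^(a/2) * u₁^(b/2) * u₂^(c/2) * u₃^(d/2) with ht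
    have htS : t ∈ Subgroup.closure {-1, u₁, u₂, u₃} :=
      mul_mem (mul_mem (mul_mem (Subgroup.zpow_mem _ h1 _) (Subgroup.zpow_mem _ h2 _))
        (Subgroup.zpow_mem _ h3 _)) (Subgroup.zpow_mem _ h4 _)
    have hsplit : ∀ (u : (𝓞 K')ˣ) (n : ℤ), u ^ n = u ^ (n % 2) * (u ^ (n / 2)) ^ (2:ℕ) := by
      intro u n
      rw [← zpow_natCast (u ^ (n/2)), ← zpow_mul, ← zpow_add]
      congr 1
      omega
    have hx2 : x = ((-1)^(a%2) * u₁^(b%2) * u₂^(c%2) * u₃^(d%2)) * t^(2:ℕ) := by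
      rw [hx, ht, mul_pow, mul_pow, mul_pow,
        hsplit (-1) a, hsplit u₁ b, hsplit u₂ c, hsplit u₃ d]
      simp only [mul_assoc, mul_left_comm, mul_comm]
    set w : (𝓞 K')ˣ := y * t⁻¹ with hwdef
    have hg : ((-1:(𝓞 K')ˣ)^(a%2) * u₁^(b%2) * u₂^(c%2) * u₃^(d%2)) = w ^ (2:ℕ) := by
      have h := hy
      rw [hx2] at h
      have hw2 : w ^ (2:ℕ) = y ^ (2:ℕ) * (t ^ (2:ℕ))⁻¹ := by
        rw [hwdef, mul_pow, inv_pow]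
      rw [hw2, h, mul_inv_cancel_right]
    have ha0 : 0 ≤ a % 2 := Int.emod_nonneg a (by norm_num)
    have hb0 : 0 ≤ b % 2 := Int.emod_nonneg b (by norm_num)
    have hc0 : 0 ≤ c % 2 := Int.emod_nonneg c (by norm_num)
    have hd0 : 0 ≤ d % 2 := Int.emod_nonneg d (by norm_num)
    have ha' : a % 2 = ((a % 2).toNat : ℤ) := (Int.toNat_of_nonneg ha0).symm
    have hb' : b % 2 = ((b % 2).toNat : ℤ) := (Int.toNat_of_nonneg hb0).symm
    have hc' : c % 2 = ((c % 2).toNat : ℤ) := (Int.toNat_of_nonneg hc0).symm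
    have hd' : d % 2 = ((d % 2).toNat : ℤ) := (Int.toNat_of_nonneg hd0).symm
    set A : ℕ := (a % 2).toNat
    set B : ℕ := (b % 2).toNat
    set C : ℕ := (c % 2).toNat
    set D : ℕ := (d % 2).toNat
    rw [ha', hb', hc', hd', zpow_natCast, zpow_natCast, zpow_natCast, zpow_natCast]
      at hg hx2
    have hK := congrArg (fun u : (𝓞 K')ˣ => algebraMap (𝓞 K') K' (u : 𝓞 K')) hg
    simp only [Units.val_mul, Units.val_pow_eq_pow_val, Units.val_neg, Units.val_one,
      map_mul, map_pow, map_neg, map_one, hu₁, hu₂, hu₃] at hK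
    have K1 := key 19 (by norm_num) 8 (by norm_num) (by norm_num) K' β hβ hgen (algebraMap (𝓞 K') K' (w : 𝓞 K')) A B C D hK
    have K2 := key 23 (by norm_num) 9 (by norm_num) (by norm_num) K' β hβ hgen (algebraMap (𝓞 K') K' (w : 𝓞 K')) A B C D hK
    have K3 := key 31 (by norm_num) 2 (by norm_num) (by norm_num) K' β hβ hgen (algebraMap (𝓞 K') K' (w : 𝓞 K')) A B C D hK
    have K4 := key 47 (by norm_num) 16 (by norm_num) (by norm_num) K' β hβ hgen (algebraMap (𝓞 K') K' (w : 𝓞 K')) A B C D hK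
    have hA : A = 0 ∨ A = 1 := by
      have := Int.emod_two_eq a
      omega
    have hB : B = 0 ∨ B = 1 := by
      have := Int.emod_two_eq b
      omega
    have hC : C = 0 ∨ C = 1 := by
      have := Int.emod_two_eq c
      omega
    have hD : D = 0 ∨ D = 1 := by
      have := Int.emod_two_eq d
      omega
    rcases hA with hA | hA <;> rcases hB with hB | hB <;> rcases hC with hC | hC <;>
        rcases hD with hD | hD <;>
      simp only [hA, hB, hC, hD, pow_zero, pow_one, one_mul, mul_one]
        at K1 K2 K3 K4 hx2 <;>
      first
        | exact ⟨t, htS, hx2.symm⟩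
        | (exfalso; revert K1; decide)
        | (exfalso; revert K2; decide)
        | (exfalso; revert K3; decide)
        | (exfalso; revert K4; decide)
  · rintro ⟨y, hyS, hy⟩
    refine ⟨?_, y, hy⟩
    rw [← hy]
    exact pow_mem hyS 2
end

section
/- For every integer a and every odd prime p, the ℚ_p-algebras ℚ_p[X]/(X⁸ − a) and ℚ_p[X]/(X⁸ − 16a) are isomorphic. -/
open Polynomial

/-- Lift a square mod `p` to a square in `ℚ_p`, for integers not divisible by `p`. -/
lemma exists_padic_sqrt (p : ℕ) [Fact p.Prime] (hp : p ≠ 2) (u : ℤ) (hu : ¬ (p : ℤ) ∣ u)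
    (hsq : IsSquare (u : ZMod p)) : ∃ t : ℚ_[p], t ^ 2 = (u : ℚ_[p]) := by
  obtain ⟨s, hs⟩ := hsq
  have hsne : (s : ZMod p) ≠ 0 := by
    intro h
    apply hu
    have : (u : ZMod p) = 0 := by rw [hs, h, mul_zero]
    exact_mod_cast (ZMod.intCast_zmod_eq_zero_iff_dvd u p).mp this
  have hpdvd : ¬ (p : ℤ) ∣ (s.val : ℤ) := by
    intro h
    apply hsne
    have : ((s.val : ℤ) : ZMod p) = 0 := (ZMod.intCast_zmod_eq_zero_iff_dvd _ p).mpr h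
    simpa using this
  set a : ℤ_[p] := ((s.val : ℤ) : ℤ_[p]) with ha
  set F : Polynomial ℤ_[p] := X ^ 2 - C (u : ℤ_[p]) with hF
  have hder : F.derivative.eval a = ((2 * (s.val : ℤ) : ℤ) : ℤ_[p]) := by
    simp [hF, ha]
    try push_cast
    try ring
    exact Or.inl trivial
  have hdernorm : ‖F.derivative.eval a‖ = 1 := by
    rw [hder]
    refine le_antisymm (PadicInt.norm_le_one _) (not_lt.mp ?_)
    rw [PadicInt.norm_int_lt_one_iff_dvd]
    intro hdvd
    rcases (Int.Prime.dvd_mul (Fact.out : p.Prime) hdvd) with h | h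
    · have h2 : p ∣ 2 := by simpa using h
      have := Nat.le_of_dvd (by norm_num) h2
      have hp2 := (Fact.out : p.Prime).two_le
      omega
    · exact hpdvd (Int.natCast_dvd_natCast.mpr (by simpa using h) |>.trans (by simp))
  have hevalnorm : ‖F.eval a‖ < 1 := by
    have heq : F.eval a = (((s.val : ℤ) ^ 2 - u : ℤ) : ℤ_[p]) := by
      simp [hF, ha]
      try push_cast
      try ring
    rw [heq, PadicInt.norm_int_lt_one_iff_dvd]
    have : (((s.val : ℤ) ^ 2 - u : ℤ) : ZMod p) = 0 := by
      push_cast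
      simp only [ZMod.natCast_val, ZMod.intCast_cast, ZMod.cast_id]
      rw [hs]; ring
    exact_mod_cast (ZMod.intCast_zmod_eq_zero_iff_dvd _ p).mp this
  obtain ⟨z, hz, -, -, -⟩ := hensels_lemma (F := F) (a := a)
    (by simp only [Polynomial.coe_aeval_eq_eval]; rw [hdernorm]; simpa using hevalnorm)
  refine ⟨(z : ℚ_[p]), ?_⟩
  have hz2 : z ^ 2 = (u : ℤ_[p]) := by
    have h' := hz
    simp only [Polynomial.coe_aeval_eq_eval, hF, Polynomial.eval_sub, Polynomial.eval_pow, Polynomial.eval_X,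
      Polynomial.eval_C] at h'
    exact sub_eq_zero.mp h'
  exact_mod_cast congrArg (fun x : ℤ_[p] => (x : ℚ_[p])) hz2

/-- In `ℚ_p` for odd `p`, `16` is an eighth power. -/
lemma exists_pow8_eq_sixteen (p : ℕ) [Fact p.Prime] (hp : p ≠ 2) :
    ∃ c : ℚ_[p], c ^ 8 = 16 := by
  have hp2 := (Fact.out : p.Prime).two_le
  have hpd2 : ¬ (p : ℤ) ∣ (2 : ℤ) := by
    intro h
    have h2 : (p : ℤ) ≤ 2 := Int.le_of_dvd (by norm_num) h
    omega
  have hpdm2 : ¬ (p : ℤ) ∣ (-2 : ℤ) := fun h => hpd2 ((dvd_neg).mp h)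
  have hpdm1 : ¬ (p : ℤ) ∣ (-1 : ℤ) := by
    intro h
    have := Int.le_of_dvd (by norm_num) ((dvd_neg).mp h)
    omega
  have h2ne : ((2 : ℤ) : ZMod p) ≠ 0 := fun h =>
    hpd2 ((ZMod.intCast_zmod_eq_zero_iff_dvd _ p).mp h)
  have hm2ne : ((-2 : ℤ) : ZMod p) ≠ 0 := fun h =>
    hpdm2 ((ZMod.intCast_zmod_eq_zero_iff_dvd _ p).mp h)
  have key : IsSquare ((2 : ℤ) : ZMod p) ∨ IsSquare ((-2 : ℤ) : ZMod p) ∨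
      IsSquare ((-1 : ℤ) : ZMod p) := by
    by_contra hcon
    push_neg at hcon
    obtain ⟨h1, h2, h3⟩ := hcon
    have q2 : quadraticChar (ZMod p) ((2 : ℤ) : ZMod p) = -1 :=
      quadraticChar_neg_one_iff_not_isSquare.mpr h1
    have qm1 : quadraticChar (ZMod p) ((-1 : ℤ) : ZMod p) = -1 :=
      quadraticChar_neg_one_iff_not_isSquare.mpr h3
    have : quadraticChar (ZMod p) ((-2 : ℤ) : ZMod p) = 1 := by
      have e : ((-2 : ℤ) : ZMod p) = ((-1 : ℤ) : ZMod p) * ((2 : ℤ) : ZMod p) := by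
        push_cast; ring
      rw [e, map_mul, q2, qm1]; norm_num
    exact h2 ((quadraticChar_one_iff_isSquare hm2ne).mp this)
  rcases key with h | h | h
  · obtain ⟨t, ht⟩ := exists_padic_sqrt p hp 2 hpd2 h
    refine ⟨t, ?_⟩
    have : t ^ 8 = (t ^ 2) ^ 4 := by ring
    rw [this, ht]; norm_num
  · obtain ⟨t, ht⟩ := exists_padic_sqrt p hp (-2) hpdm2 h
    refine ⟨t, ?_⟩
    have : t ^ 8 = (t ^ 2) ^ 4 := by ring
    rw [this, ht]; norm_num
  · obtain ⟨t, ht⟩ := exists_padic_sqrt p hp (-1) hpdm1 h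
    have ht' : t ^ 2 = -1 := by rw [ht]; norm_num
    refine ⟨1 + t, ?_⟩
    have e1 : (1 + t) ^ 2 = 2 * t := by linear_combination ht'
    have e2 : (1 + t) ^ 4 = -4 := by
      have : (1 + t) ^ 4 = ((1 + t) ^ 2) ^ 2 := by ring
      rw [this, e1]; linear_combination 4 * ht'
    calc (1 + t) ^ 8 = ((1 + t) ^ 4) ^ 2 := by ring
      _ = 16 := by rw [e2]; norm_num

/-- For every integer `a` and every odd prime `p`, the `ℚ_p`-algebras
`ℚ_p[X]/(X⁸ - a)` and `ℚ_p[X]/(X⁸ - 16a)` are isomorphic. -/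
theorem padic_algebras_isomorphic (a : ℤ) (p : ℕ) [Fact p.Prime] (hp : p ≠ 2) :
    Nonempty (AdjoinRoot (X ^ 8 - C (a : ℚ_[p])) ≃ₐ[ℚ_[p]]
      AdjoinRoot (X ^ 8 - C ((16 * a : ℤ) : ℚ_[p]))) := by
  obtain ⟨c, hc⟩ := exists_pow8_eq_sixteen p hp
  have hc0 : c ≠ 0 := by
    intro h
    rw [h] at hc
    norm_num at hc
  set A : Polynomial ℚ_[p] := X ^ 8 - C (a : ℚ_[p]) with hA
  set B : Polynomial ℚ_[p] := X ^ 8 - C ((16 * a : ℤ) : ℚ_[p]) with hB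
  have hB16 : ((16 * a : ℤ) : ℚ_[p]) = 16 * (a : ℚ_[p]) := by push_cast; ring
  set iB := algebraMap ℚ_[p] (AdjoinRoot B) with hiB
  set iA := algebraMap ℚ_[p] (AdjoinRoot A) with hiA
  have hrootB : (AdjoinRoot.root B) ^ 8 = iB ((16 * a : ℤ) : ℚ_[p]) := by
    have h := AdjoinRoot.eval₂_root B
    simp only [hB, Polynomial.eval₂_sub, Polynomial.eval₂_pow, Polynomial.eval₂_X,
      Polynomial.eval₂_C] at h
    rw [hiB, AdjoinRoot.algebraMap_eq]
    exact sub_eq_zero.mp h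
  have hrootA : (AdjoinRoot.root A) ^ 8 = iA (a : ℚ_[p]) := by
    have h := AdjoinRoot.eval₂_root A
    simp only [hA, Polynomial.eval₂_sub, Polynomial.eval₂_pow, Polynomial.eval₂_X,
      Polynomial.eval₂_C] at h
    rw [hiA, AdjoinRoot.algebraMap_eq]
    exact sub_eq_zero.mp h
  have hval1 : c⁻¹ ^ 8 * ((16 * a : ℤ) : ℚ_[p]) = (a : ℚ_[p]) := by
    rw [hB16, inv_pow, hc, inv_mul_cancel_left₀ (by norm_num : (16 : ℚ_[p]) ≠ 0)]
  have hval2 : c ^ 8 * (a : ℚ_[p]) = ((16 * a : ℤ) : ℚ_[p]) := by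
    rw [hB16, hc]
  have keyf : Polynomial.aeval (iB c⁻¹ * AdjoinRoot.root B) A = 0 := by
    have hpow : (iB c⁻¹ * AdjoinRoot.root B) ^ 8 = iB (a : ℚ_[p]) := by
      rw [mul_pow, ← map_pow, hrootB, ← map_mul, hval1]
    rw [hA]
    simp only [map_sub, map_pow, Polynomial.aeval_X, Polynomial.aeval_C, hpow]
    rw [← hiB]
    exact sub_self _
  have keyg : Polynomial.aeval (iA c * AdjoinRoot.root A) B = 0 := by
    have hpow : (iA c * AdjoinRoot.root A) ^ 8 = iA ((16 * a : ℤ) : ℚ_[p]) := by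
      rw [mul_pow, ← map_pow, hrootA, ← map_mul, hval2]
    rw [hB]
    simp only [map_sub, map_pow, Polynomial.aeval_X, Polynomial.aeval_C, hpow]
    rw [← hiA]
    exact sub_self _
  set f : AdjoinRoot A →ₐ[ℚ_[p]] AdjoinRoot B := AdjoinRoot.liftAlgHom A (Algebra.ofId _ _) _
    (by rw [Algebra.toRingHom_ofId, ← Polynomial.aeval_def]; exact keyf) with hf
  set g : AdjoinRoot B →ₐ[ℚ_[p]] AdjoinRoot A := AdjoinRoot.liftAlgHom B (Algebra.ofId _ _) _
    (by rw [Algebra.toRingHom_ofId, ← Polynomial.aeval_def]; exact keyg) with hg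
  refine ⟨AlgEquiv.ofAlgHom f g ?_ ?_⟩
  · apply AdjoinRoot.algHom_ext
    rw [AlgHom.comp_apply, hg, AdjoinRoot.liftAlgHom_root, map_mul, AlgHom.commutes,
      hf, AdjoinRoot.liftAlgHom_root, AlgHom.coe_id, id_eq, ← hiB, ← mul_assoc, ← map_mul,
      mul_inv_cancel₀ hc0, map_one, one_mul]
  · apply AdjoinRoot.algHom_ext
    rw [AlgHom.comp_apply, hf, AdjoinRoot.liftAlgHom_root, map_mul, AlgHom.commutes,
      hg, AdjoinRoot.liftAlgHom_root, AlgHom.coe_id, id_eq, ← hiA, ← mul_assoc, ← map_mul,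
      inv_mul_cancel₀ hc0, map_one, one_mul]
end

section
/- For every integer a with a ≡ −1 (mod 32), the ℚ₂-algebras ℚ₂[X]/(X⁸ − a) and ℚ₂[X]/(X⁸ − 16a) are isomorphic. -/
open Polynomial


theorem qaux1 {A : Type*} [CommRing A] (x s k : A) (hx : x^8 = -s^8)
    (hk : k*(16*s^8) = -1) : (16*k*(s^2*x^7 - s^6*x^3))^8 = -(16*s^8) := by
    linear_combination (4294967296*x^48*s^16*k^8 - 34359738368*x^44*s^20*k^8 + 115964116992*x^40*s^24*k^8 - 206158430208*x^36*s^28*k^8 + 184683593728*x^32*s^32*k^8 - 34359738368*x^28*s^36*k^8 - 64424509440*x^24*s^40*k^8 + 68719476736*x^16*s^48*k^8 - 68719476736*x^8*s^56*k^8 + 68719476736*s^64*k^8) * hx + (-4294967296*s^64*k^7 + 268435456*s^56*k^6 - 16777216*s^48*k^5 + 1048576*s^40*k^4 - 65536*s^32*k^3 + 4096*s^24*k^2 - 256*s^16*k + 16*s^8) * hk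

theorem qaux2 {A : Type*} [CommRing A] (x s k : A) (hx : x^8 = -(16*s^8))
    (hk : k*(16*s^8) = -1) : (k*(s^2*x^7 - 4*s^6*x^3))^8 = -s^8 := by
    linear_combination (1*x^48*s^16*k^8 - 32*x^44*s^20*k^8 + 432*x^40*s^24*k^8 - 3072*x^36*s^28*k^8 + 11008*x^32*s^32*k^8 - 8192*x^28*s^36*k^8 - 61440*x^24*s^40*k^8 + 1048576*x^16*s^48*k^8 - 16777216*x^8*s^56*k^8 + 268435456*s^64*k^8) * hx + (-268435456*s^64*k^7 + 16777216*s^56*k^6 - 1048576*s^48*k^5 + 65536*s^40*k^4 - 4096*s^32*k^3 + 256*s^24*k^2 - 16*s^16*k + 1*s^8) * hk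

theorem qaux3 {A : Type*} [CommRing A] (x s k : A) (hx : x^8 = -s^8)
    (hk : k*(16*s^8) = -1) :
    k*(s^2*(16*k*(s^2*x^7 - s^6*x^3))^7 - 4*s^6*(16*k*(s^2*x^7 - s^6*x^3))^3) = x := by
    linear_combination (268435456*x^41*s^16*k^8 - 1879048192*x^37*s^20*k^8 + 5368709120*x^33*s^24*k^8 - 7516192768*x^29*s^28*k^8 + 4026531840*x^25*s^32*k^8 + 1879048192*x^21*s^36*k^8 - 2147483648*x^17*s^40*k^8 - 2147483648*x^13*s^44*k^8 - 16384*x^13*s^12*k^4 + 2147483648*x^9*s^48*k^8 + 49152*x^9*s^16*k^4 + 2147483648*x^5*s^52*k^8 - 32768*x^5*s^20*k^4 - 2147483648*x*s^56*k^8 - 32768*x*s^24*k^4) * hx + (-134217728*x^5*s^52*k^7 + 8388608*x^5*s^44*k^6 - 524288*x^5*s^36*k^5 + 32768*x^5*s^28*k^4 + 134217728*x*s^56*k^7 - 8388608*x*s^48*k^6 + 524288*x*s^40*k^5 - 32768*x*s^32*k^4 + 4096*x*s^24*k^3 - 256*x*s^16*k^2 + 16*x*s^8*k - 1*x) * hk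

theorem qaux4 {A : Type*} [CommRing A] (x s k : A) (hx : x^8 = -(16*s^8))
    (hk : k*(16*s^8) = -1) :
    16*k*(s^2*(k*(s^2*x^7 - 4*s^6*x^3))^7 - s^6*(k*(s^2*x^7 - 4*s^6*x^3))^3) = x := by
    linear_combination (16*x^41*s^16*k^8 - 448*x^37*s^20*k^8 + 5120*x^33*s^24*k^8 - 28672*x^29*s^28*k^8 + 61440*x^25*s^32*k^8 + 114688*x^21*s^36*k^8 - 524288*x^17*s^40*k^8 - 2097152*x^13*s^44*k^8 - 16*x^13*s^12*k^4 + 8388608*x^9*s^48*k^8 + 192*x^9*s^16*k^4 + 33554432*x^5*s^52*k^8 - 512*x^5*s^20*k^4 - 134217728*x*s^56*k^8 - 2048*x*s^24*k^4) * hx + (-33554432*x^5*s^52*k^7 + 2097152*x^5*s^44*k^6 - 131072*x^5*s^36*k^5 + 8192*x^5*s^28*k^4 + 134217728*x*s^56*k^7 - 8388608*x*s^48*k^6 + 524288*x*s^40*k^5 - 32768*x*s^32*k^4 + 4096*x*s^24*k^3 - 256*x*s^16*k^2 + 16*x*s^8*k - 1*x) * hk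

theorem padic2_eighth_root (a : ℤ) (b : ℤ) (hb1 : b % 2 = 1) (hb2 : (128:ℤ) ∣ b ^ 8 + a) :
    ∃ w : ℤ_[2], w ^ 8 = ((-a : ℤ) : ℤ_[2]) := by
  have hevF : (X ^ 8 - C ((-a : ℤ) : ℤ_[2])).eval (b : ℤ_[2]) = ((b ^ 8 + a : ℤ) : ℤ_[2]) := by
    simp only [eval_sub, eval_pow, eval_X, eval_C]
    push_cast
    ring
  have hder : derivative (X ^ 8 - C ((-a : ℤ) : ℤ_[2])) = C 8 * X ^ 7 := by
    rw [derivative_sub, derivative_C, derivative_X_pow]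
    norm_num
  have hevd : (derivative (X ^ 8 - C ((-a : ℤ) : ℤ_[2]))).eval (b : ℤ_[2])
      = 8 * (b : ℤ_[2]) ^ 7 := by
    rw [hder]
    simp
  have hb0 : ‖(b : ℤ_[2])‖ = 1 := by
    refine le_antisymm (PadicInt.norm_le_one _) ?_
    by_contra hlt
    push_neg at hlt
    have := (PadicInt.norm_int_lt_one_iff_dvd (p := 2) b).mp hlt
    omega
  have hnd : ‖(derivative (X ^ 8 - C ((-a : ℤ) : ℤ_[2]))).eval (b : ℤ_[2])‖ = (8 : ℝ)⁻¹ := by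
    rw [hevd, norm_mul, norm_pow, hb0]
    have h2 : ‖(8 : ℤ_[2])‖ = (8 : ℝ)⁻¹ := by
      have h8 : (8 : ℤ_[2]) = (2 : ℤ_[2]) ^ 3 := by norm_num
      rw [h8, norm_pow, show ((2:ℤ_[2])) = ((2:ℕ):ℤ_[2]) by norm_num, PadicInt.norm_p]
      norm_num
    rw [h2]
    norm_num
  have hne : ‖(X ^ 8 - C ((-a : ℤ) : ℤ_[2])).eval (b : ℤ_[2])‖
      < ‖(derivative (X ^ 8 - C ((-a : ℤ) : ℤ_[2]))).eval (b : ℤ_[2])‖ ^ 2 := by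
    have hle : ‖(X ^ 8 - C ((-a : ℤ) : ℤ_[2])).eval (b : ℤ_[2])‖ ≤ (2 : ℝ) ^ (-(7:ℕ) : ℤ) := by
      rw [hevF]
      exact (PadicInt.norm_int_le_pow_iff_dvd (p := 2) (k := b ^ 8 + a) (n := 7)).mpr
        (by exact_mod_cast hb2)
    rw [hnd]
    refine lt_of_le_of_lt hle (by norm_num)
  obtain ⟨w, hw, -⟩ := hensels_lemma hne
  refine ⟨w, ?_⟩
  have h0 : w ^ 8 - ((-a : ℤ) : ℤ_[2]) = 0 := by
    simpa only [map_sub, map_pow, aeval_X, aeval_C, Algebra.algebraMap_self, RingHom.id_apply] using hw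
  linear_combination h0
/-- For every integer `a ≡ -1 (mod 32)`, the `ℚ₂`-algebras `ℚ₂[X]/(X⁸ - a)` and
`ℚ₂[X]/(X⁸ - 16a)` are isomorphic. -/
theorem padic2_algebras_isomorphic (a : ℤ) (ha : a ≡ -1 [ZMOD 32]) :
    Nonempty (AdjoinRoot (X ^ 8 - C (a : ℚ_[2])) ≃ₐ[ℚ_[2]]
      AdjoinRoot (X ^ 8 - C ((16 * a : ℤ) : ℚ_[2]))) := by
  -- extract congruence information
  obtain ⟨m, hm⟩ := Int.ModEq.dvd ha
  have ham : a = -1 - 32 * m := by omega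
  -- find a good approximate 8th root of -a
  have hb : ∃ b : ℤ, b % 2 = 1 ∧ (128 : ℤ) ∣ b ^ 8 + a := by
    have h4 : m % 4 = 0 ∨ m % 4 = 1 ∨ m % 4 = 2 ∨ m % 4 = 3 := by omega
    rcases h4 with h | h | h | h
    · exact ⟨1, by norm_num, by omega⟩
    · refine ⟨3, by norm_num, ?_⟩
      have h38 : (3 : ℤ) ^ 8 = 6561 := by norm_num
      omega
    · refine ⟨7, by norm_num, ?_⟩
      have h78 : (7 : ℤ) ^ 8 = 5764801 := by norm_num
      omega
    · refine ⟨5, by norm_num, ?_⟩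
      have h58 : (5 : ℤ) ^ 8 = 390625 := by norm_num
      omega
  obtain ⟨b, hb1, hb2⟩ := hb
  obtain ⟨w, hw8⟩ := padic2_eighth_root a b hb1 hb2
  -- transfer to ℚ_[2]
  have hu : ((w : ℚ_[2])) ^ 8 = -((a : ℤ) : ℚ_[2]) := by
    have h := congrArg (fun z : ℤ_[2] => (z : ℚ_[2])) hw8
    push_cast at h
    exact_mod_cast h
  set u : ℚ_[2] := (w : ℚ_[2]) with hu_def
  clear_value u
  clear hu_def hw8 hm ha
  have haq : ((a : ℚ_[2])) ≠ 0 := by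
    rw [Int.cast_ne_zero]
    omega
  have h16a : (16 * (a : ℚ_[2])) ≠ 0 := mul_ne_zero (by norm_num) haq
  have hinv : (16 * (a : ℚ_[2]))⁻¹ * (16 * (a : ℚ_[2])) = 1 := inv_mul_cancel₀ h16a
  have hcast : ((16 * a : ℤ) : ℚ_[2]) = -(16 * u ^ 8) := by
    push_cast [hu]
    ring
  have hcast' : ((a : ℤ) : ℚ_[2]) = -u ^ 8 := by
    linear_combination hu
  set f : Polynomial ℚ_[2] := X ^ 8 - C (a : ℚ_[2]) with hf
  set g : Polynomial ℚ_[2] := X ^ 8 - C ((16 * a : ℤ) : ℚ_[2]) with hg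
  -- images of the constants
  have hAa : algebraMap ℚ_[2] (AdjoinRoot f) ((a : ℤ) : ℚ_[2])
      = -(algebraMap ℚ_[2] (AdjoinRoot f) u) ^ 8 := by
    have h := congrArg (algebraMap ℚ_[2] (AdjoinRoot f)) hcast'
    rwa [map_neg, map_pow] at h
  have hA16a : algebraMap ℚ_[2] (AdjoinRoot f) ((16 * a : ℤ) : ℚ_[2])
      = -(16 * (algebraMap ℚ_[2] (AdjoinRoot f) u) ^ 8) := by
    have h := congrArg (algebraMap ℚ_[2] (AdjoinRoot f)) hcast
    rwa [map_neg, map_mul, map_pow, map_ofNat] at h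
  have hBa : algebraMap ℚ_[2] (AdjoinRoot g) ((a : ℤ) : ℚ_[2])
      = -(algebraMap ℚ_[2] (AdjoinRoot g) u) ^ 8 := by
    have h := congrArg (algebraMap ℚ_[2] (AdjoinRoot g)) hcast'
    rwa [map_neg, map_pow] at h
  have hB16a : algebraMap ℚ_[2] (AdjoinRoot g) ((16 * a : ℤ) : ℚ_[2])
      = -(16 * (algebraMap ℚ_[2] (AdjoinRoot g) u) ^ 8) := by
    have h := congrArg (algebraMap ℚ_[2] (AdjoinRoot g)) hcast
    rwa [map_neg, map_mul, map_pow, map_ofNat] at h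
  -- the root relations
  have hxA : (AdjoinRoot.root f) ^ 8 = -(algebraMap ℚ_[2] (AdjoinRoot f) u) ^ 8 := by
    have h0 : aeval (AdjoinRoot.root f) (X ^ 8 - C (a : ℚ_[2])) = 0 := by
      rw [← hf, AdjoinRoot.aeval_eq, AdjoinRoot.mk_self]
    simp only [map_sub, map_pow, aeval_X, aeval_C] at h0
    rw [sub_eq_zero] at h0
    rw [h0, hAa]
  have hxB : (AdjoinRoot.root g) ^ 8 = -(16 * (algebraMap ℚ_[2] (AdjoinRoot g) u) ^ 8) := by
    have h0 : aeval (AdjoinRoot.root g) (X ^ 8 - C ((16 * a : ℤ) : ℚ_[2])) = 0 := by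
      rw [← hg, AdjoinRoot.aeval_eq, AdjoinRoot.mk_self]
    simp only [map_sub, map_pow, aeval_X, aeval_C] at h0
    rw [sub_eq_zero] at h0
    rw [h0, hB16a]
  -- the inverse relations
  have hkK : (16 * (a : ℚ_[2]))⁻¹ * (16 * u ^ 8) = -1 := by
    linear_combination (16 * (a : ℚ_[2]))⁻¹ * 16 * hu - hinv
  have hkA : algebraMap ℚ_[2] (AdjoinRoot f) ((16 * (a : ℚ_[2]))⁻¹) *
      (16 * (algebraMap ℚ_[2] (AdjoinRoot f) u) ^ 8) = -1 := by
    have h := congrArg (algebraMap ℚ_[2] (AdjoinRoot f)) hkK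
    rwa [map_mul, map_mul, map_pow, map_ofNat, map_neg, map_one] at h
  have hkB : algebraMap ℚ_[2] (AdjoinRoot g) ((16 * (a : ℚ_[2]))⁻¹) *
      (16 * (algebraMap ℚ_[2] (AdjoinRoot g) u) ^ 8) = -1 := by
    have h := congrArg (algebraMap ℚ_[2] (AdjoinRoot g)) hkK
    rwa [map_mul, map_mul, map_pow, map_ofNat, map_neg, map_one] at h
  -- the element of AdjoinRoot f that is a root of g
  have hy : aeval (16 * algebraMap ℚ_[2] (AdjoinRoot f) ((16 * (a : ℚ_[2]))⁻¹) *
      ((algebraMap ℚ_[2] (AdjoinRoot f) u) ^ 2 * (AdjoinRoot.root f) ^ 7 -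
       (algebraMap ℚ_[2] (AdjoinRoot f) u) ^ 6 * (AdjoinRoot.root f) ^ 3)) g = 0 := by
    conv_lhs => rw [hg]
    simp only [map_sub, map_pow, aeval_X, aeval_C]
    rw [sub_eq_zero, hA16a]
    exact qaux1 _ _ _ hxA hkA
  -- the element of AdjoinRoot g that is a root of f
  have hz : aeval (algebraMap ℚ_[2] (AdjoinRoot g) ((16 * (a : ℚ_[2]))⁻¹) *
      ((algebraMap ℚ_[2] (AdjoinRoot g) u) ^ 2 * (AdjoinRoot.root g) ^ 7 -
       4 * (algebraMap ℚ_[2] (AdjoinRoot g) u) ^ 6 * (AdjoinRoot.root g) ^ 3)) f = 0 := by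
    conv_lhs => rw [hf]
    simp only [map_sub, map_pow, aeval_X, aeval_C]
    rw [sub_eq_zero, hBa]
    have h := qaux2 (AdjoinRoot.root g) (algebraMap ℚ_[2] (AdjoinRoot g) u)
      (algebraMap ℚ_[2] (AdjoinRoot g) ((16 * (a : ℚ_[2]))⁻¹)) hxB hkB
    linear_combination h
  refine ⟨AlgEquiv.ofAlgHom (AdjoinRoot.liftAlgHom f (Algebra.ofId _ _) _ (by refine Eq.trans ?_ hz; rfl)) (AdjoinRoot.liftAlgHom g (Algebra.ofId _ _) _ (by refine Eq.trans ?_ hy; rfl))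
    (AdjoinRoot.algHom_ext ?_) (AdjoinRoot.algHom_ext ?_)⟩
  · -- (liftHom f) ∘ (liftHom g) = id on AdjoinRoot g
    simp only [AlgHom.coe_comp, Function.comp_apply, AdjoinRoot.liftAlgHom_root, map_mul, map_sub,
      map_pow, map_ofNat, AlgHom.commutes, AlgHom.id_apply]
    have h := qaux4 (AdjoinRoot.root g) (algebraMap ℚ_[2] (AdjoinRoot g) u)
      (algebraMap ℚ_[2] (AdjoinRoot g) ((16 * (a : ℚ_[2]))⁻¹)) hxB hkB
    linear_combination h
  · -- (liftHom g) ∘ (liftHom f) = id on AdjoinRoot f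
    simp only [AlgHom.coe_comp, Function.comp_apply, AdjoinRoot.liftAlgHom_root, map_mul, map_sub,
      map_pow, map_ofNat, AlgHom.commutes, AlgHom.id_apply]
    have h := qaux3 (AdjoinRoot.root f) (algebraMap ℚ_[2] (AdjoinRoot f) u)
      (algebraMap ℚ_[2] (AdjoinRoot f) ((16 * (a : ℚ_[2]))⁻¹)) hxA hkA
    linear_combination h
end
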